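/- Let α, β ∈ (0,1], let γ, δ, η, ζ ≥ 0 with d := ηδ + γζ + γη/α > 0, let G be the associated general Green's function, let h : [0,1] → ℝ be continuous, and define x(t) = ∫₀¹ G(t,s) h(s) s^{β−1} ds. Then the limit L₀ := lim_{t→0⁺} t^{1−α} x′(t) exists, equals (γ/d) ∫₀¹ [ζ + (η/α)(1 − s^α)] h(s) s^{β−1} ds, and the left boundary condition γ x(0) − δ L₀ = 0 holds. -/

import Mathlib

open Set MeasureTheory Filter intervalIntegral

/-- With the setup of the general Green's function problem, the limit
`L₀ = lim_{t→0⁺} t^{1−α} x′(t)` exists and equals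
`(γ/d) ∫₀¹ [ζ + (η/α)(1 − s^α)] h(s) s^{β−1} ds`, and `γ x(0) − δ L₀ = 0`. -/
theorem left_boundary_condition
    (α β : ℝ) (hα : α ∈ Set.Ioc (0:ℝ) 1) (hβ : β ∈ Set.Ioc (0:ℝ) 1)
    (γ δ η ζ : ℝ) (hγ : 0 ≤ γ) (hδ : 0 ≤ δ) (hη : 0 ≤ η) (hζ : 0 ≤ ζ)
    (d : ℝ) (hd : d = η * δ + γ * ζ + γ * η / α) (hdpos : 0 < d)
    (G : ℝ → ℝ → ℝ)
    (hG : ∀ t s : ℝ, G t s = if s ≤ t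
        then (1 / d) * (δ + (γ / α) * s ^ α) * (ζ + (η / α) * (1 - t ^ α))
        else (1 / d) * (δ + (γ / α) * t ^ α) * (ζ + (η / α) * (1 - s ^ α)))
    (h : ℝ → ℝ) (hh : ContinuousOn h (Set.Icc 0 1))
    (x : ℝ → ℝ) (hx : ∀ t : ℝ, x t = ∫ s in (0:ℝ)..1, G t s * h s * s ^ (β - 1))
    (L₀ : ℝ)
    (hL₀ : L₀ = (γ / d) * ∫ s in (0:ℝ)..1, (ζ + (η / α) * (1 - s ^ α)) * h s * s ^ (β - 1)) :
    Filter.Tendsto (fun t : ℝ => t ^ (1 - α) * deriv x t)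
      (nhdsWithin 0 (Set.Ioi (0:ℝ))) (nhds L₀) ∧
    γ * x 0 - δ * L₀ = 0 := by
  obtain ⟨hα0, hα1⟩ := hα
  obtain ⟨hβ0, hβ1⟩ := hβ
  have hαne : α ≠ 0 := ne_of_gt hα0
  have hdne : d ≠ 0 := ne_of_gt hdpos
  have hrpowα : Continuous fun s : ℝ => s ^ α := Real.continuous_rpow_const hα0.le
  set p : ℝ → ℝ := fun s => (δ + γ / α * s ^ α) * h s with hp
  set q : ℝ → ℝ := fun s => (ζ + η / α * (1 - s ^ α)) * h s with hq
  have hpc : ContinuousOn p (Icc 0 1) :=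
    (continuousOn_const.add (continuousOn_const.mul hrpowα.continuousOn)).mul hh
  have hqc : ContinuousOn q (Icc 0 1) :=
    (continuousOn_const.add (continuousOn_const.mul
      (continuousOn_const.sub hrpowα.continuousOn))).mul hh
  have hicc : uIcc (0:ℝ) 1 = Icc (0:ℝ) 1 := uIcc_of_le zero_le_one
  -- interval integrability of f s * s^(β-1)
  have hint : ∀ f : ℝ → ℝ, ContinuousOn f (Icc 0 1) → ∀ a b : ℝ, uIcc a b ⊆ Icc 0 1 →
      IntervalIntegrable (fun s => f s * s ^ (β - 1)) volume a b := fun f hf a b hab =>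
    (intervalIntegral.intervalIntegrable_rpow' (by linarith)).continuousOn_mul (hf.mono hab)
  set A : ℝ → ℝ := fun t => ∫ s in (0:ℝ)..t, p s * s ^ (β - 1) with hA
  set B : ℝ → ℝ := fun t => ∫ s in t..(1:ℝ), q s * s ^ (β - 1) with hB
  -- key formula for x on [0,1]
  have key : ∀ t ∈ Icc (0:ℝ) 1, x t
      = (ζ + η / α * (1 - t ^ α)) / d * A t + (δ + γ / α * t ^ α) / d * B t := by
    intro t ht
    obtain ⟨ht0, ht1⟩ := ht
    have hsub1 : uIcc (0:ℝ) t ⊆ Icc 0 1 := by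
      rw [uIcc_of_le ht0]; exact Icc_subset_Icc le_rfl ht1
    have hsub2 : uIcc t (1:ℝ) ⊆ Icc 0 1 := by
      rw [uIcc_of_le ht1]; exact Icc_subset_Icc ht0 le_rfl
    have e1 : ∀ s ∈ uIcc (0:ℝ) t, G t s * h s * s ^ (β - 1)
        = (ζ + η / α * (1 - t ^ α)) / d * (p s * s ^ (β - 1)) := by
      intro s hs
      rw [uIcc_of_le ht0] at hs
      rw [hG, if_pos hs.2, hp]; ring
    have e2 : ∀ s ∈ uIcc t (1:ℝ), G t s * h s * s ^ (β - 1)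
        = (δ + γ / α * t ^ α) / d * (q s * s ^ (β - 1)) := by
      intro s hs
      rw [uIcc_of_le ht1] at hs
      rw [hG, hq]
      by_cases hst : s ≤ t
      · have hst' : s = t := le_antisymm hst hs.1
        rw [if_pos hst, hst']; ring
      · rw [if_neg hst]; ring
    have i1 : IntervalIntegrable (fun s => G t s * h s * s ^ (β - 1)) volume 0 t := by
      refine (((hint p hpc 0 t hsub1).const_mul ((ζ + η / α * (1 - t ^ α)) / d))).congr ?_
      intro s hs
      exact (e1 s (uIoc_subset_uIcc hs)).symm
    have i2 : IntervalIntegrable (fun s => G t s * h s * s ^ (β - 1)) volume t 1 := by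
      refine (((hint q hqc t 1 hsub2).const_mul ((δ + γ / α * t ^ α) / d))).congr ?_
      intro s hs
      exact (e2 s (uIoc_subset_uIcc hs)).symm
    rw [hx, ← intervalIntegral.integral_add_adjacent_intervals i1 i2,
      intervalIntegral.integral_congr e1, intervalIntegral.integral_congr e2,
      intervalIntegral.integral_const_mul, intervalIntegral.integral_const_mul]
  -- continuity of the singular integrand on (0,1)
  have hcontOn : ∀ f : ℝ → ℝ, ContinuousOn f (Icc 0 1) →
      ContinuousOn (fun s => f s * s ^ (β - 1)) (Ioo 0 1) := by
    intro f hf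
    refine (hf.mono Ioo_subset_Icc_self).mul ?_
    intro s hs
    exact (Real.continuousAt_rpow_const s _ (Or.inl (ne_of_gt hs.1))).continuousWithinAt
  -- derivative of x on (0,1)
  have hderiv : ∀ t ∈ Ioo (0:ℝ) 1, HasDerivAt x
      (1 / d * t ^ (α - 1) * (γ * B t - η * A t)) t := by
    intro t ht
    obtain ⟨ht0, ht1⟩ := ht
    have hsub1 : uIcc (0:ℝ) t ⊆ Icc 0 1 := by
      rw [uIcc_of_le ht0.le]; exact Icc_subset_Icc le_rfl ht1.le
    have hsub2 : uIcc t (1:ℝ) ⊆ Icc 0 1 := by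
      rw [uIcc_of_le ht1.le]; exact Icc_subset_Icc ht0.le le_rfl
    have hmemIoo : t ∈ Ioo (0:ℝ) 1 := ⟨ht0, ht1⟩
    have hAd : HasDerivAt A (p t * t ^ (β - 1)) t := by
      refine intervalIntegral.integral_hasDerivAt_right (hint p hpc 0 t hsub1)
        ((hcontOn p hpc).stronglyMeasurableAtFilter isOpen_Ioo t hmemIoo) ?_
      exact ((hcontOn p hpc) t hmemIoo).continuousAt (isOpen_Ioo.mem_nhds hmemIoo)
    have hBd : HasDerivAt B (-(q t * t ^ (β - 1))) t := by
      refine intervalIntegral.integral_hasDerivAt_left (hint q hqc t 1 hsub2)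
        ((hcontOn q hqc).stronglyMeasurableAtFilter isOpen_Ioo t hmemIoo) ?_
      exact ((hcontOn q hqc) t hmemIoo).continuousAt (isOpen_Ioo.mem_nhds hmemIoo)
    have h1 : HasDerivAt (fun u : ℝ => u ^ α) (α * t ^ (α - 1)) t :=
      Real.hasDerivAt_rpow_const (Or.inl (ne_of_gt ht0))
    have hc1 : HasDerivAt (fun u : ℝ => (ζ + η / α * (1 - u ^ α)) / d)
        (η / α * -(α * t ^ (α - 1)) / d) t :=
      (((h1.const_sub 1).const_mul (η / α)).const_add ζ).div_const d
    have hc2 : HasDerivAt (fun u : ℝ => (δ + γ / α * u ^ α) / d)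
        (γ / α * (α * t ^ (α - 1)) / d) t :=
      ((h1.const_mul (γ / α)).const_add δ).div_const d
    have hF := (hc1.mul hAd).add (hc2.mul hBd)
    have hev : x =ᶠ[nhds t] fun u =>
        (ζ + η / α * (1 - u ^ α)) / d * A u + (δ + γ / α * u ^ α) / d * B u := by
      filter_upwards [isOpen_Ioo.mem_nhds hmemIoo] with u hu
      exact key u (Ioo_subset_Icc_self hu)
    have := hF.congr_of_eventuallyEq hev
    refine this.congr_deriv ?_
    simp only [hp, hq]
    field_simp
    ring
  -- boundary values
  have hA0 : A 0 = 0 := intervalIntegral.integral_same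
  have hL₀' : L₀ = γ / d * B 0 := hL₀
  -- continuity of A and B at 0 within [0,1]
  have hAint : IntegrableOn (fun s => p s * s ^ (β - 1)) (Icc 0 1) volume := by
    rw [integrableOn_Icc_iff_integrableOn_Ioc]
    simpa [intervalIntegrable_iff, uIoc_of_le (zero_le_one : (0:ℝ) ≤ 1)] using
      hint p hpc 0 1 (by rw [hicc])
  have hBint : IntegrableOn (fun s => q s * s ^ (β - 1)) (Icc 0 1) volume := by
    rw [integrableOn_Icc_iff_integrableOn_Ioc]
    simpa [intervalIntegrable_iff, uIoc_of_le (zero_le_one : (0:ℝ) ≤ 1)] using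
      hint q hqc 0 1 (by rw [hicc])
  have hAc : ContinuousWithinAt A (Icc 0 1) 0 := by
    have := intervalIntegral.continuousOn_primitive_interval (a := 0) (b := 1)
      (f := fun s => p s * s ^ (β - 1)) (by rwa [hicc])
    rw [hicc] at this
    exact this 0 (left_mem_Icc.mpr zero_le_one)
  have hBc : ContinuousWithinAt B (Icc 0 1) 0 := by
    have := intervalIntegral.continuousOn_primitive_interval_left (a := 0) (b := 1)
      (f := fun s => q s * s ^ (β - 1)) (by rwa [hicc])
    rw [hicc] at this
    exact this 0 (left_mem_Icc.mpr zero_le_one)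
  constructor
  · rw [← nhdsWithin_Ioo_eq_nhdsGT (zero_lt_one : (0:ℝ) < 1)]
    have htend : Tendsto (fun t => 1 / d * (γ * B t - η * A t))
        (nhdsWithin 0 (Ioo 0 1)) (nhds L₀) := by
      have hBt : Tendsto B (nhdsWithin 0 (Ioo 0 1)) (nhds (B 0)) :=
        (hBc.mono Ioo_subset_Icc_self).tendsto
      have hAt : Tendsto A (nhdsWithin 0 (Ioo 0 1)) (nhds (A 0)) :=
        (hAc.mono Ioo_subset_Icc_self).tendsto
      have : Tendsto (fun t => 1 / d * (γ * B t - η * A t)) (nhdsWithin 0 (Ioo 0 1))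
          (nhds (1 / d * (γ * B 0 - η * A 0))) :=
        (((hBt.const_mul γ).sub (hAt.const_mul η)).const_mul (1 / d))
      convert this using 2
      rw [hL₀', hA0]; ring
    refine htend.congr' ?_
    filter_upwards [self_mem_nhdsWithin] with t ht
    have hd1 := (hderiv t ht).deriv
    rw [hd1]
    symm
    have hpow : t ^ (1 - α) * t ^ (α - 1) = 1 := by
      rw [← Real.rpow_add ht.1]
      norm_num
    calc t ^ (1 - α) * (1 / d * t ^ (α - 1) * (γ * B t - η * A t))
        = (t ^ (1 - α) * t ^ (α - 1)) * (1 / d * (γ * B t - η * A t)) := by ring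
      _ = 1 / d * (γ * B t - η * A t) := by rw [hpow]; ring
  · have hx0 := key 0 (left_mem_Icc.mpr zero_le_one)
    rw [Real.zero_rpow hαne] at hx0
    rw [hx0, hA0, hL₀']
    field_simp
    ring
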